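/- For every t ∈ ℝ, the limit as s → 0 (s ≠ 0) of K^B_{22}(γ(t), γ(t+s)) equals κ(t)/(2π), where for x ≠ γ(s′) one defines K^B_{22}(x, γ(s′)) = (1/(2π))·[(r·τ(s′))(τ(s′)·n(t)) − (r·n(s′))(n(s′)·n(t))]/‖r‖² + (1/(2π))·(r·n(t))·[(r·n(s′))² − (r·τ(s′))²]/‖r‖⁴ with r = x − γ(s′); K^B_{22} equals −G^B_{n_x n_y n_y} + G^B_{n_x τ_y τ_y}, the x-derivative taken in the direction n(t). -/

import Mathlib

open Real Filter Topology MeasureTheory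

noncomputable section

/-- Euclidean dot product on `ℝ × ℝ`. -/
def dot2 (v w : ℝ × ℝ) : ℝ := v.1 * w.1 + v.2 * w.2

/-- Unit tangent vector `τ(s) = γ′(s)`. -/
def tang (γ : ℝ → ℝ × ℝ) (s : ℝ) : ℝ × ℝ := deriv γ s

/-- Unit normal vector `n(s) = (τ₂(s), −τ₁(s))`. -/
def nor (γ : ℝ → ℝ × ℝ) (s : ℝ) : ℝ × ℝ := ((deriv γ s).2, -(deriv γ s).1)

/-- Signed curvature `κ(s) = −γ″(s)·n(s)`. -/
def curv (γ : ℝ → ℝ × ℝ) (s : ℝ) : ℝ := -(dot2 (deriv (deriv γ) s) (nor γ s))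

/-- Explicit formula for `K^B_{22}(x, γ(s')) = −G^B_{n_x n_y n_y} + G^B_{n_x τ_y τ_y}`,
with `r = x − γ(s')` and the `x`-derivative in the direction `n(t)`. -/
def K22B (γ : ℝ → ℝ × ℝ) (t : ℝ) (x : ℝ × ℝ) (s' : ℝ) : ℝ :=
  1 / (2 * π) *
      (dot2 (x - γ s') (tang γ s') * dot2 (tang γ s') (nor γ t)
        - dot2 (x - γ s') (nor γ s') * dot2 (nor γ s') (nor γ t))
      / dot2 (x - γ s') (x - γ s')
    + 1 / (2 * π) * dot2 (x - γ s') (nor γ t) *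
      ((dot2 (x - γ s') (nor γ s')) ^ 2 - (dot2 (x - γ s') (tang γ s')) ^ 2)
      / (dot2 (x - γ s') (x - γ s')) ^ 2

private lemma tendsto_div_of_hasDerivAt' {f : ℝ → ℝ} {f' : ℝ} (h : HasDerivAt f f' 0)
    (h0 : f 0 = 0) :
    Tendsto (fun s => f s / s) (𝓝[≠] (0:ℝ)) (𝓝 f') := by
  have h1 := hasDerivAt_iff_tendsto_slope.mp h
  refine h1.congr fun s => ?_
  rw [slope_def_field, h0, sub_zero, sub_zero]

private lemma tendsto_div_sq_of_hasDerivAt' {f f' : ℝ → ℝ} {c : ℝ}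
    (hf : ∀ s, HasDerivAt f (f' s) s) (hf' : HasDerivAt f' c 0)
    (h0 : f 0 = 0) (h0' : f' 0 = 0) :
    Tendsto (fun s => f s / s ^ 2) (𝓝[≠] (0:ℝ)) (𝓝 (c / 2)) := by
  have hslope := tendsto_div_of_hasDerivAt' hf' h0'
  refine HasDerivAt.lhopital_zero_nhdsNE (f' := f') (g' := fun s => 2 * s) ?_ ?_ ?_ ?_ ?_ ?_
  · exact Filter.Eventually.of_forall fun s => hf s
  · exact Filter.Eventually.of_forall fun s => by simpa [mul_comm] using hasDerivAt_pow 2 s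
  · filter_upwards [self_mem_nhdsWithin] with s hs
    exact mul_ne_zero two_ne_zero hs
  · have h2 : Tendsto f (𝓝 0) (𝓝 (f 0)) := (hf 0).continuousAt.tendsto
    rw [h0] at h2
    exact h2.mono_left nhdsWithin_le_nhds
  · have h2 : Tendsto (fun s : ℝ => s ^ 2) (𝓝 0) (𝓝 0) := by
      simpa using (continuous_pow 2).tendsto (0:ℝ)
    exact h2.mono_left nhdsWithin_le_nhds
  · have h2 := hslope.div_const 2
    refine h2.congr fun s => ?_
    rw [div_div, mul_comm]


private lemma key_algebra (a b p q s : ℝ) (hs : s ≠ 0) (hab : a^2+b^2 ≠ 0) :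
    1/(2*π) * ((a/s * (p/s) - b/s^2 * q) / ((a/s)^2 + s^2*(b/s^2)^2)
      + (a/s * (p/s) + b/s^2 * q) * (s^2*(b/s^2)^2 - (a/s)^2) / ((a/s)^2 + s^2*(b/s^2)^2)^2)
    = 1/(2*π) * (a*p - b*q)/(a^2+b^2) + 1/(2*π) * (a*p+b*q) * (b^2 - a^2)/(a^2+b^2)^2 := by
  have hCs : (a/s)^2 + s^2*(b/s^2)^2 = (a^2+b^2)/s^2 := by field_simp
  have h1 : a/s * (p/s) - b/s^2 * q = (a*p - b*q)/s^2 := by field_simp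
  have h2 : a/s * (p/s) + b/s^2 * q = (a*p + b*q)/s^2 := by field_simp
  have h3 : s^2*(b/s^2)^2 - (a/s)^2 = (b^2 - a^2)/s^2 := by field_simp
  rw [hCs, h1, h2, h3]
  field_simp

set_option maxHeartbeats 1000000 in
theorem stmt3 (L : ℝ) (hL : 0 < L) (γ : ℝ → ℝ × ℝ)
    (hγ : ContDiff ℝ (⊤ : ℕ∞) γ)
    (hper : ∀ s, γ (s + L) = γ s)
    (hinj : Set.InjOn γ (Set.Ico 0 L))
    (harc : ∀ s, dot2 (deriv γ s) (deriv γ s) = 1)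
    (t : ℝ) :
    Tendsto (fun s : ℝ => K22B γ t (γ t) (t + s)) (𝓝[≠] (0 : ℝ))
      (𝓝 (curv γ t / (2 * π))) := by
  have hγ1 : ContDiff ℝ (⊤:ℕ∞) (fun u => (γ u).1) := hγ.fst
  have hγ2 : ContDiff ℝ (⊤:ℕ∞) (fun u => (γ u).2) := hγ.snd
  set D1 : ℝ → ℝ := deriv (fun u => (γ u).1) with hD1def
  set D2 : ℝ → ℝ := deriv (fun u => (γ u).2) with hD2def
  have hD1c : ContDiff ℝ (⊤:ℕ∞) D1 := (contDiff_infty_iff_deriv.mp hγ1).2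
  have hD2c : ContDiff ℝ (⊤:ℕ∞) D2 := (contDiff_infty_iff_deriv.mp hγ2).2
  set E1 : ℝ → ℝ := deriv D1 with hE1def
  set E2 : ℝ → ℝ := deriv D2 with hE2def
  have hE1c : ContDiff ℝ (⊤:ℕ∞) E1 := (contDiff_infty_iff_deriv.mp hD1c).2
  have hE2c : ContDiff ℝ (⊤:ℕ∞) E2 := (contDiff_infty_iff_deriv.mp hD2c).2
  have hone : ((⊤:ℕ∞) : WithTop ℕ∞) ≠ 0 := by simp
  have hg1d : ∀ u, HasDerivAt (fun v => (γ v).1) (D1 u) u := fun u =>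
    ((hγ1.differentiable hone) u).hasDerivAt
  have hg2d : ∀ u, HasDerivAt (fun v => (γ v).2) (D2 u) u := fun u =>
    ((hγ2.differentiable hone) u).hasDerivAt
  have hD1d : ∀ u, HasDerivAt D1 (E1 u) u := fun u =>
    ((hD1c.differentiable hone) u).hasDerivAt
  have hD2d : ∀ u, HasDerivAt D2 (E2 u) u := fun u =>
    ((hD2c.differentiable hone) u).hasDerivAt
  have hE1d : ∀ u, HasDerivAt E1 (deriv E1 u) u := fun u =>
    ((hE1c.differentiable hone) u).hasDerivAt
  have hE2d : ∀ u, HasDerivAt E2 (deriv E2 u) u := fun u =>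
    ((hE2c.differentiable hone) u).hasDerivAt
  have hdγ : ∀ u, deriv γ u = (D1 u, D2 u) := fun u => ((hg1d u).prodMk (hg2d u)).deriv
  have hddγ : ∀ u, deriv (deriv γ) u = (E1 u, E2 u) := by
    intro u
    have h : deriv γ = fun v => (D1 v, D2 v) := funext hdγ
    rw [h]
    exact ((hD1d u).prodMk (hD2d u)).deriv
  have harc' : ∀ u, D1 u ^ 2 + D2 u ^ 2 = 1 := by
    intro u
    have h := harc u
    rw [hdγ u] at h
    simp only [dot2] at h
    linear_combination h
  have hshift : ∀ (f fd : ℝ → ℝ), (∀ u, HasDerivAt f (fd u) u) →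
      ∀ s, HasDerivAt (fun u => f (t + u)) (fd (t + s)) s := by
    intro f fd hf s
    have h := (hf (t + s)).comp s ((hasDerivAt_id s).const_add t)
    exact h.congr_deriv (mul_one _)
  have hGa := hshift _ _ hg1d
  have hGb := hshift _ _ hg2d
  have hT1 := hshift _ _ hD1d
  have hT2 := hshift _ _ hD2d
  have hU1 := hshift _ _ hE1d
  have hU2 := hshift _ _ hE2d
  set a : ℝ → ℝ := fun s => ((γ t).1 - (γ (t+s)).1) * D1 (t+s) + ((γ t).2 - (γ (t+s)).2) * D2 (t+s) with hadef
  set b : ℝ → ℝ := fun s => ((γ t).1 - (γ (t+s)).1) * D2 (t+s) - ((γ t).2 - (γ (t+s)).2) * D1 (t+s) with hbdef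
  set p : ℝ → ℝ := fun s => D1 (t+s) * D2 t - D2 (t+s) * D1 t with hpdef
  set q : ℝ → ℝ := fun s => D2 (t+s) * D2 t + D1 (t+s) * D1 t with hqdef
  set m : ℝ → ℝ := fun s => ((γ t).1 - (γ (t+s)).1) * D2 t - ((γ t).2 - (γ (t+s)).2) * D1 t with hmdef
  set c : ℝ → ℝ := fun s => ((γ t).1 - (γ (t+s)).1)^2 + ((γ t).2 - (γ (t+s)).2)^2 with hcdef
  set κ : ℝ := E2 t * D1 t - E1 t * D2 t with hκdef
  have hκcurv : curv γ t = κ := by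
    simp only [curv, nor, dot2, hdγ, hddγ, hκdef]
    ring
  -- limit of a s / s
  have ha0 : a 0 = 0 := by simp [hadef]
  have haD : HasDerivAt a (-1 : ℝ) 0 := by
    rw [hadef]
    have h := ((((hasDerivAt_const (0:ℝ) (γ t).1).sub (hGa 0)).mul (hT1 0)).add
      ((((hasDerivAt_const (0:ℝ) (γ t).2).sub (hGb 0)).mul (hT2 0))))
    refine h.congr_deriv ?_; symm; simp only [Pi.sub_apply]
    simp only [add_zero]
    linear_combination harc' t
  have hA : Tendsto (fun s => a s / s) (𝓝[≠] (0:ℝ)) (𝓝 (-1)) :=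
    tendsto_div_of_hasDerivAt' haD ha0
  -- limit of p s / s
  have hp0 : p 0 = 0 := by simp [hpdef]; ring
  have hpD : HasDerivAt p (-κ) 0 := by
    rw [hpdef]
    have h := ((hT1 0).mul_const (D2 t)).sub ((hT2 0).mul_const (D1 t))
    refine h.congr_deriv ?_; symm
    simp only [add_zero]
    rw [hκdef]; ring
  have hP : Tendsto (fun s => p s / s) (𝓝[≠] (0:ℝ)) (𝓝 (-κ)) :=
    tendsto_div_of_hasDerivAt' hpD hp0
  -- limit of q
  have hq : Tendsto q (𝓝[≠] (0:ℝ)) (𝓝 1) := by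
    have hc1 : Continuous (fun s => D1 (t+s)) :=
      hD1c.continuous.comp (continuous_const.add continuous_id)
    have hc2 : Continuous (fun s => D2 (t+s)) :=
      hD2c.continuous.comp (continuous_const.add continuous_id)
    have hcq : Continuous q := by
      rw [hqdef]
      exact (hc2.mul continuous_const).add (hc1.mul continuous_const)
    have h0 : q 0 = 1 := by
      simp only [hqdef, add_zero]
      linear_combination harc' t
    have h2 := hcq.continuousAt (x := 0) |>.tendsto
    rw [h0] at h2
    exact h2.mono_left nhdsWithin_le_nhds
  -- limit of b s / s^2
  set b' : ℝ → ℝ := fun s => ((γ t).1 - (γ (t+s)).1) * E2 (t+s) - ((γ t).2 - (γ (t+s)).2) * E1 (t+s) with hb'def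
  have hb' : ∀ s, HasDerivAt b (b' s) s := by
    intro s
    rw [hbdef, hb'def]
    have h := ((((hasDerivAt_const s (γ t).1).sub (hGa s)).mul (hT2 s)).sub
      (((hasDerivAt_const s (γ t).2).sub (hGb s)).mul (hT1 s)))
    refine h.congr_deriv ?_; symm; simp only [Pi.sub_apply]
    ring
  have hb'0 : b' 0 = 0 := by simp [hb'def]
  have hb0 : b 0 = 0 := by simp [hbdef]
  have hb'' : HasDerivAt b' (-κ) 0 := by
    rw [hb'def]
    have h := ((((hasDerivAt_const (0:ℝ) (γ t).1).sub (hGa 0)).mul (hU2 0)).sub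
      (((hasDerivAt_const (0:ℝ) (γ t).2).sub (hGb 0)).mul (hU1 0)))
    refine h.congr_deriv ?_; symm; simp only [Pi.sub_apply]
    simp only [add_zero]
    rw [hκdef]; ring
  have hB : Tendsto (fun s => b s / s ^ 2) (𝓝[≠] (0:ℝ)) (𝓝 ((-κ) / 2)) :=
    tendsto_div_sq_of_hasDerivAt' hb' hb'' hb0 hb'0
  -- s^2 → 0
  have hs2 : Tendsto (fun s : ℝ => s^2) (𝓝[≠] (0:ℝ)) (𝓝 0) := by
    have h2 : Tendsto (fun s : ℝ => s ^ 2) (𝓝 0) (𝓝 0) := by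
      simpa using (continuous_pow 2).tendsto (0:ℝ)
    exact h2.mono_left nhdsWithin_le_nhds
  -- C → 1
  have hC : Tendsto (fun s => (a s / s)^2 + s^2 * (b s / s^2)^2) (𝓝[≠] (0:ℝ)) (𝓝 1) := by
    have h := (hA.pow 2).add (hs2.mul (hB.pow 2))
    have he : ((-1:ℝ))^2 + 0 * ((-κ)/2)^2 = 1 := by norm_num
    rwa [he] at h
  -- eventual nonvanishing
  have hane : ∀ᶠ s in 𝓝[≠] (0:ℝ), a s ≠ 0 := by
    have h := hA.eventually_ne (show (-1:ℝ) ≠ 0 by norm_num)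
    filter_upwards [h] with s hs
    intro ha'
    apply hs
    rw [ha']
    simp
  have hcne : ∀ᶠ s in 𝓝[≠] (0:ℝ), c s ≠ 0 := by
    filter_upwards [hane] with s hs hc0
    apply hs
    simp only [hcdef] at hc0
    have hsq := (add_eq_zero_iff_of_nonneg (sq_nonneg _) (sq_nonneg _)).mp hc0
    have h1 := pow_eq_zero_iff (two_ne_zero) |>.mp hsq.1
    have h2 := pow_eq_zero_iff (two_ne_zero) |>.mp hsq.2
    simp only [hadef]
    rw [h1, h2]
    ring
  -- the combined tendsto
  have hbig := (((hA.mul hP).sub (hB.mul hq)).div hC one_ne_zero).add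
      ((((hA.mul hP).add (hB.mul hq)).mul ((hs2.mul (hB.pow 2)).sub (hA.pow 2))).div
        (hC.pow 2) (by norm_num)) |>.const_mul (1/(2*π))
  -- eventual equality
  have heq : (fun s => 1/(2*π) * ((a s / s * (p s / s) - b s / s^2 * q s) /
        ((a s / s)^2 + s^2 * (b s / s^2)^2) +
        (a s / s * (p s / s) + b s / s^2 * q s) *
        (s^2 * (b s / s^2)^2 - (a s / s)^2) /
        ((a s / s)^2 + s^2 * (b s / s^2)^2)^2))
      =ᶠ[𝓝[≠] (0:ℝ)] (fun s => K22B γ t (γ t) (t + s)) := by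
    filter_upwards [hane, hcne, self_mem_nhdsWithin] with s hsa hsc hs0
    have hs0' : s ≠ 0 := hs0
    have hT : D1 (t+s)^2 + D2 (t+s)^2 = 1 := harc' (t+s)
    have hKs : K22B γ t (γ t) (t+s) = 1/(2*π) * (a s * p s - b s * q s)/(c s)
        + 1/(2*π) * m s * ((b s)^2 - (a s)^2)/(c s)^2 := by
      simp only [K22B, tang, nor, dot2, hdγ, Prod.fst_sub, Prod.snd_sub,
        hadef, hbdef, hpdef, hqdef, hmdef, hcdef]
      ring
    have hmid : m s = a s * p s + b s * q s := by
      simp only [hadef, hbdef, hpdef, hqdef, hmdef]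
      linear_combination (-(((γ t).1 - (γ (t+s)).1) * D2 t - ((γ t).2 - (γ (t+s)).2) * D1 t)) * hT
    have hcab : c s = a s^2 + b s^2 := by
      simp only [hadef, hbdef, hcdef]
      linear_combination (-((((γ t).1 - (γ (t+s)).1)^2 + ((γ t).2 - (γ (t+s)).2)^2))) * hT
    have hab : a s ^ 2 + b s ^ 2 ≠ 0 := hcab ▸ hsc
    rw [hKs, hmid, hcab]
    exact key_algebra (a s) (b s) (p s) (q s) s hs0' hab
  have hfinal := hbig.congr' heq
  convert hfinal using 2
  rw [hκcurv]
  ring
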